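/- For every measurable function ψ : ℝⁿ → ℝⁿ with E_{x₀∼q₀} E_{x_t∼k(·|x₀)}[‖∇_{x_t} ln k(x_t|x₀) − ψ(x_t)‖²] < ∞, one has E_{x₀∼q₀} E_{x_t∼k(·|x₀)} [‖∇_{x_t} ln k(x_t|x₀) − ψ(x_t)‖²] = E_{x_t∼p} [‖∇_{x_t} ln p(x_t) − ψ(x_t)‖²] + C, where the constant C does not depend on ψ. In particular, over any family of such functions ψ, the two objectives have the same minimizers. -/

import Mathlib

open MeasureTheory

noncomputable section

/-- `ℝⁿ` as a Euclidean space. -/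
abbrev Euc (n : ℕ) := EuclideanSpace ℝ (Fin n)

/-- Score `∇ ln f` of a positive function `f`. -/
def scoreOf {n : ℕ} (f : Euc n → ℝ) (x : Euc n) : Euc n :=
  gradient (fun u => Real.log (f u)) x

/-- Denoising score matching objective:
`E_{x₀∼q₀} E_{x_t∼k(·|x₀)} [‖∇_{x_t} ln k(x_t|x₀) − ψ(x_t)‖²]`. -/
def dsmObj (n : ℕ) (q₀ : Euc n → ℝ) (k : Euc n → Euc n → ℝ) (ψ : Euc n → Euc n) : ℝ :=
  ∫ z : Euc n × Euc n, q₀ z.1 * k z.2 z.1 * ‖scoreOf (fun u => k u z.1) z.2 - ψ z.2‖ ^ 2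

/-- Score matching objective against the marginal:
`E_{x_t∼p} [‖∇_{x_t} ln p(x_t) − ψ(x_t)‖²]`. -/
def smObj (n : ℕ) (p : Euc n → ℝ) (ψ : Euc n → Euc n) : ℝ :=
  ∫ x : Euc n, p x * ‖scoreOf p x - ψ x‖ ^ 2

/-- Finiteness of the denoising objective (integrability of its integrand). -/
def dsmFin (n : ℕ) (q₀ : Euc n → ℝ) (k : Euc n → Euc n → ℝ) (ψ : Euc n → Euc n) : Prop :=
  Integrable (fun z : Euc n × Euc n =>
    q₀ z.1 * k z.2 z.1 * ‖scoreOf (fun u => k u z.1) z.2 - ψ z.2‖ ^ 2)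

/-- Finiteness of the marginal objective (integrability of its integrand). -/
def smFin (n : ℕ) (p : Euc n → ℝ) (ψ : Euc n → Euc n) : Prop :=
  Integrable (fun x : Euc n => p x * ‖scoreOf p x - ψ x‖ ^ 2)

lemma inner_gradient_eq {n : ℕ} (f : Euc n → ℝ) (x v : Euc n) :
    inner ℝ (gradient f x) v = fderiv ℝ f x v := by
  simp only [gradient]
  exact InnerProductSpace.toDual_symm_apply

lemma inner_gradient_eq' {n : ℕ} (f : Euc n → ℝ) (x v : Euc n) :
    (inner ℝ v (gradient f x) : ℝ) = fderiv ℝ f x v := by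
  rw [real_inner_comm]; exact inner_gradient_eq f x v

lemma norm_gradient_eq {n : ℕ} (f : Euc n → ℝ) (x : Euc n) :
    ‖gradient f x‖ = ‖fderiv ℝ f x‖ := by
  simp only [gradient]
  exact LinearIsometryEquiv.norm_map _ _

lemma measurable_gradient_param {n : ℕ} {k : Euc n → Euc n → ℝ}
    (hk_meas : Measurable fun z : Euc n × Euc n => k z.1 z.2)
    (hk_diff : ∀ x₀, Differentiable ℝ fun xt => k xt x₀) :
    Measurable fun z : Euc n × Euc n => gradient (fun u => k u z.1) z.2 := by
  have hD : ∀ v : Euc n, Measurable fun z : Euc n × Euc n =>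
      fderiv ℝ (fun u => k u z.1) z.2 v := by
    intro v
    have hm : ∀ m : ℕ, Measurable fun z : Euc n × Euc n =>
        (((m : ℝ) + 1)⁻¹)⁻¹ • (k (z.2 + ((m : ℝ) + 1)⁻¹ • v) z.1 - k z.2 z.1) := by
      intro m
      have h1 : Measurable fun z : Euc n × Euc n => k (z.2 + ((m : ℝ) + 1)⁻¹ • v) z.1 :=
        hk_meas.comp ((measurable_snd.add_const _).prodMk measurable_fst)
      have h2 : Measurable fun z : Euc n × Euc n => k z.2 z.1 :=
        hk_meas.comp (measurable_snd.prodMk measurable_fst)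
      have := ((h1.sub h2)).const_mul ((((m : ℝ) + 1)⁻¹)⁻¹)
      simpa [smul_eq_mul, mul_comm] using this
    have ht : Filter.Tendsto (fun m : ℕ => ((m : ℝ) + 1)⁻¹) Filter.atTop
        (nhdsWithin 0 {(0:ℝ)}ᶜ) := by
      apply tendsto_nhdsWithin_of_tendsto_nhds_of_eventually_within
      · have := tendsto_one_div_add_atTop_nhds_zero_nat (𝕜 := ℝ)
        simpa [one_div] using this
      · exact Filter.Eventually.of_forall fun m => by
          simp only [Set.mem_compl_iff, Set.mem_singleton_iff]
          positivity
    apply measurable_of_tendsto_metrizable hm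
    rw [tendsto_pi_nhds]
    intro z
    have h1 : HasDerivAt (fun t : ℝ => k (z.2 + t • v) z.1)
        (fderiv ℝ (fun u => k u z.1) z.2 v) 0 :=
      ((hk_diff z.1 z.2).hasFDerivAt.hasLineDerivAt v)
    have h2 := h1.tendsto_slope_zero.comp ht
    convert h2 using 2 with m
    simp [zero_add]
  classical
  have hrepr : (fun z : Euc n × Euc n => gradient (fun u => k u z.1) z.2)
      = fun z => ∑ i : Fin n, (fderiv ℝ (fun u => k u z.1) z.2
          ((EuclideanSpace.basisFun (Fin n) ℝ) i)) • ((EuclideanSpace.basisFun (Fin n) ℝ) i) := by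
    funext z
    have := ((EuclideanSpace.basisFun (Fin n) ℝ)).sum_repr' (gradient (fun u => k u z.1) z.2)
    rw [← this]
    congr 1
    funext i
    rw [real_inner_comm, inner_gradient_eq]
  rw [hrepr]
  exact Finset.measurable_sum _ fun i _ => (hD _).smul_const _

lemma scoreOf_eq {n : ℕ} {f : Euc n → ℝ} {x : Euc n} (hf : DifferentiableAt ℝ f x)
    (hx : 0 < f x) : scoreOf f x = (f x)⁻¹ • gradient f x := by
  unfold scoreOf gradient
  have h1 : HasFDerivAt (fun u => Real.log (f u)) ((f x)⁻¹ • fderiv ℝ f x) x := by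
    have := (Real.hasDerivAt_log hx.ne').comp_hasFDerivAt x hf.hasFDerivAt
    exact this
  rw [h1.fderiv, LinearIsometryEquiv.map_smul]

lemma smul_scoreOf {n : ℕ} {f : Euc n → ℝ} {x : Euc n} (hf : DifferentiableAt ℝ f x)
    (hx : 0 < f x) : f x • scoreOf f x = gradient f x := by
  rw [scoreOf_eq hf hx, smul_smul, mul_inv_cancel₀ hx.ne', one_smul]

set_option maxHeartbeats 2000000 in
/-- denoising score matching, Vincent's identity. There is a constant `C`,
independent of `ψ`, such that for every measurable `ψ` for which both objectives are finite,
`E_{x₀∼q₀} E_{x_t∼k(·|x₀)}[‖∇ ln k(x_t|x₀) − ψ(x_t)‖²]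
  = E_{x_t∼p}[‖∇ ln p(x_t) − ψ(x_t)‖²] + C`;
in particular over any family of such functions the two objectives have the same minimizers. -/
theorem stmt_1 (n : ℕ) (hn : 1 ≤ n)
    (q₀ : Euc n → ℝ) (hq₀_nonneg : ∀ x, 0 ≤ q₀ x) (hq₀_meas : Measurable q₀)
    (hq₀_prob : (∫ x : Euc n, q₀ x) = 1)
    (k : Euc n → Euc n → ℝ)  -- `k xt x₀` is the density `k(x_t | x₀)`
    (hk_meas : Measurable fun z : Euc n × Euc n => k z.1 z.2)
    (hk_pos : ∀ x₀ xt, 0 < k xt x₀)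
    (hk_diff : ∀ x₀, ContDiff ℝ 1 fun xt => k xt x₀)
    (hk_prob : ∀ x₀, (∫ xt : Euc n, k xt x₀) = 1)
    (p : Euc n → ℝ) (hp : ∀ xt, p xt = ∫ x₀ : Euc n, q₀ x₀ * k xt x₀)
    (hp_pos : ∀ xt, 0 < p xt) (hp_diff : Differentiable ℝ p)
    (hfin_dsm : dsmFin n q₀ k fun _ => 0)
    (hfin_sm : smFin n p fun _ => 0) :
    ∃ C : ℝ,
      (∀ ψ : Euc n → Euc n, Measurable ψ → dsmFin n q₀ k ψ → smFin n p ψ →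
        dsmObj n q₀ k ψ = smObj n p ψ + C)
      ∧ ∀ Ψ : Set (Euc n → Euc n),
          (∀ ψ ∈ Ψ, Measurable ψ ∧ dsmFin n q₀ k ψ ∧ smFin n p ψ) →
          ∀ ψ₀ ∈ Ψ, ((∀ ψ ∈ Ψ, dsmObj n q₀ k ψ₀ ≤ dsmObj n q₀ k ψ) ↔
            (∀ ψ ∈ Ψ, smObj n p ψ₀ ≤ smObj n p ψ)) := by
  classical
  have hvol : (volume : Measure (Euc n × Euc n)) = (volume : Measure (Euc n)).prod volume :=
    rfl
  have hk_diff' : ∀ x₀, Differentiable ℝ fun xt => k xt x₀ :=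
    fun x₀ => (hk_diff x₀).differentiable one_ne_zero
  have hk_cont : ∀ x₀, Continuous fun xt => k xt x₀ := fun x₀ => (hk_diff' x₀).continuous
  have hp_cont : Continuous p := hp_diff.continuous
  -- the parametrized gradient
  set G : Euc n × Euc n → Euc n := fun z => gradient (fun u => k u z.1) z.2 with hGdef
  have hG_meas : Measurable G := measurable_gradient_param hk_meas hk_diff'
  have hGsk : ∀ z : Euc n × Euc n, k z.2 z.1 • scoreOf (fun u => k u z.1) z.2 = G z :=
    fun z => smul_scoreOf ((hk_diff' z.1) z.2) (hk_pos z.1 z.2)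
  have hk_meas' : Measurable fun z : Euc n × Euc n => k z.2 z.1 :=
    hk_meas.comp (measurable_snd.prodMk measurable_fst)
  have hsk_meas : Measurable fun z : Euc n × Euc n => scoreOf (fun u => k u z.1) z.2 := by
    have he : (fun z : Euc n × Euc n => scoreOf (fun u => k u z.1) z.2)
        = fun z => (k z.2 z.1)⁻¹ • G z :=
      funext fun z => scoreOf_eq ((hk_diff' z.1) z.2) (hk_pos z.1 z.2)
    rw [he]
    exact (hk_meas'.inv).smul hG_meas
  have hgradp_meas : Measurable fun x : Euc n => gradient p x := by
    borelize (Euc n →L[ℝ] ℝ)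
    exact (LinearIsometryEquiv.continuous _).measurable.comp (measurable_fderiv ℝ p)
  have hsp_meas : Measurable fun x : Euc n => scoreOf p x := by
    have he : (fun x : Euc n => scoreOf p x) = fun x => (p x)⁻¹ • gradient p x :=
      funext fun x => scoreOf_eq (hp_diff x) (hp_pos x)
    rw [he]
    exact (hp_cont.measurable.inv).smul hgradp_meas
  have hgradp : ∀ x, gradient p x = p x • scoreOf p x :=
    fun x => (smul_scoreOf (hp_diff x) (hp_pos x)).symm
  -- basic integrability
  have Iq : Integrable q₀ := by
    by_contra h; rw [integral_undef h] at hq₀_prob; exact one_ne_zero hq₀_prob.symm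
  have Ik : ∀ x₀, Integrable (fun xt => k xt x₀) := by
    intro x₀; by_contra h
    have := hk_prob x₀; rw [integral_undef h] at this; exact one_ne_zero this.symm
  have hqk_meas : Measurable (fun z : Euc n × Euc n => q₀ z.1 * k z.2 z.1) :=
    (hq₀_meas.comp measurable_fst).mul hk_meas'
  have Iqk : Integrable (fun z : Euc n × Euc n => q₀ z.1 * k z.2 z.1)
      ((volume : Measure (Euc n)).prod volume) := by
    refine (integrable_prod_iff hqk_meas.aestronglyMeasurable).2 ⟨?_, ?_⟩
    · exact Filter.Eventually.of_forall fun x₀ => ((Ik x₀).const_mul (q₀ x₀))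
    · have he : ∀ x₀ : Euc n, (∫ xt, ‖q₀ x₀ * k xt x₀‖) = q₀ x₀ := by
        intro x₀
        have h1 : (fun xt => ‖q₀ x₀ * k xt x₀‖) = fun xt => q₀ x₀ * k xt x₀ := by
          funext xt
          rw [Real.norm_eq_abs, abs_of_nonneg (mul_nonneg (hq₀_nonneg _) (hk_pos _ _).le)]
        rw [h1, integral_const_mul, hk_prob x₀, mul_one]
      exact Iq.congr (Filter.Eventually.of_forall fun x₀ => (he x₀).symm)
  have Ip : Integrable p := by
    refine Iqk.swap.integral_prod_left.congr (Filter.Eventually.of_forall fun xt => ?_)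
    exact (hp xt).symm
  have IA : Integrable (fun z : Euc n × Euc n =>
      q₀ z.1 * k z.2 z.1 * ‖scoreOf (fun u => k u z.1) z.2‖ ^ 2)
      ((volume : Measure (Euc n)).prod volume) := by
    have := hfin_dsm; unfold dsmFin at this
    rw [hvol] at this; simpa using this
  have Isp : Integrable (fun x => p x * ‖scoreOf p x‖ ^ 2) := by
    have := hfin_sm; unfold smFin at this; simpa using this
  have Igradp : Integrable (fun x => gradient p x) := by
    refine Integrable.mono' ((Isp.add Ip).div_const 2) hgradp_meas.aestronglyMeasurable
      (Filter.Eventually.of_forall fun x => ?_)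
    simp only [Pi.add_apply]
    rw [hgradp x, norm_smul, Real.norm_of_nonneg (hp_pos x).le]
    nlinarith [mul_nonneg (hp_pos x).le (sq_nonneg (‖scoreOf p x‖ - 1)),
      (hp_pos x).le, norm_nonneg (scoreOf p x)]
  have IG : Integrable (fun z : Euc n × Euc n => q₀ z.1 • G z)
      ((volume : Measure (Euc n)).prod volume) := by
    refine Integrable.mono' ((IA.add Iqk).div_const 2)
      (((hq₀_meas.comp measurable_fst).smul hG_meas).aestronglyMeasurable)
      (Filter.Eventually.of_forall fun z => ?_)
    simp only [Pi.add_apply]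
    rw [norm_smul, Real.norm_of_nonneg (hq₀_nonneg z.1), ← hGsk z, norm_smul,
      Real.norm_of_nonneg (hk_pos z.1 z.2).le]
    nlinarith [mul_nonneg (mul_nonneg (hq₀_nonneg z.1) (hk_pos z.1 z.2).le)
      (sq_nonneg (‖scoreOf (fun u => k u z.1) z.2‖ - 1)),
      norm_nonneg (scoreOf (fun u => k u z.1) z.2),
      mul_nonneg (hq₀_nonneg z.1) (hk_pos z.1 z.2).le]
  set g : Euc n → Euc n := fun xt => ∫ x₀, q₀ x₀ • G (x₀, xt) with hgdef
  have Ig : Integrable g := by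
    have := IG.swap.integral_prod_left
    exact this
  -- the key a.e. identity : g = gradient p a.e.
  have hDkv_meas : ∀ v : Euc n, Measurable fun z : Euc n × Euc n =>
      fderiv ℝ (fun u => k u z.1) z.2 v := by
    intro v
    have h1 : Measurable fun z : Euc n × Euc n => (inner ℝ (G z) v : ℝ) :=
      hG_meas.inner measurable_const
    have h2 : (fun z : Euc n × Euc n => (inner ℝ (G z) v : ℝ))
        = fun z => fderiv ℝ (fun u => k u z.1) z.2 v :=
      funext fun z => inner_gradient_eq _ _ _
    rwa [h2] at h1
  have hDkv_bound : ∀ (v : Euc n) (z : Euc n × Euc n),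
      |fderiv ℝ (fun u => k u z.1) z.2 v| ≤ ‖G z‖ * ‖v‖ := by
    intro v z
    rw [← inner_gradient_eq (fun u => k u z.1) z.2 v]
    exact abs_real_inner_le_norm _ _
  have key : ∀ᵐ xt : Euc n, g xt = gradient p xt := by
    refine ae_eq_of_integral_contDiff_smul_eq Ig.locallyIntegrable
      Igradp.locallyIntegrable ?_
    intro φ hφ hφs
    have hφc : Continuous φ := hφ.continuous
    obtain ⟨M, hM⟩ := hφs.exists_bound_of_continuous hφc
    have hφdiff : Differentiable ℝ φ := hφ.differentiable (by simp)
    have hDφvc : ∀ v : Euc n, Continuous fun x => fderiv ℝ φ x v :=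
      fun v => (hφ.continuous_fderiv (by simp)).clm_apply continuous_const
    have hDφcs : ∀ v : Euc n, HasCompactSupport fun x => fderiv ℝ φ x v :=
      fun v => hφs.fderiv_apply ℝ v
    -- integration by parts against k(·|x₀)
    have IBPk : ∀ (v : Euc n) (x₀ : Euc n),
        (∫ xt, φ xt * fderiv ℝ (fun u => k u x₀) xt v)
          = - ∫ xt, fderiv ℝ φ xt v * k xt x₀ := by
      intro v x₀
      apply integral_mul_fderiv_eq_neg_fderiv_mul_of_integrable
      · exact ((hDφvc v).mul (hk_cont x₀)).integrable_of_hasCompactSupport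
          ((hDφcs v).mul_right)
      · have hc : Continuous fun xt => φ xt * fderiv ℝ (fun u => k u x₀) xt v :=
          hφc.mul (((hk_diff x₀).continuous_fderiv one_ne_zero).clm_apply continuous_const)
        exact hc.integrable_of_hasCompactSupport hφs.mul_right
      · exact (hφc.mul (hk_cont x₀)).integrable_of_hasCompactSupport hφs.mul_right
      · exact fun x _ => hφdiff x
      · exact fun x _ => hk_diff' x₀ x
    -- integration by parts against p
    have IBPp : ∀ v : Euc n,
        (∫ xt, φ xt * fderiv ℝ p xt v) = - ∫ xt, fderiv ℝ φ xt v * p xt := by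
      intro v
      apply integral_mul_fderiv_eq_neg_fderiv_mul_of_integrable
      · exact ((hDφvc v).mul hp_cont).integrable_of_hasCompactSupport
          ((hDφcs v).mul_right)
      · have hfdp_meas : Measurable fun x : Euc n => fderiv ℝ p x v := by
          have h1 : Measurable fun x : Euc n => (inner ℝ (gradient p x) v : ℝ) :=
            hgradp_meas.inner measurable_const
          have h2 : (fun x : Euc n => (inner ℝ (gradient p x) v : ℝ))
              = fun x => fderiv ℝ p x v := funext fun x => inner_gradient_eq p x v
          rwa [h2] at h1
        refine Integrable.mono' ((Igradp.norm.const_mul (M * ‖v‖)))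
          ((hφc.measurable.mul hfdp_meas).aestronglyMeasurable)
          (Filter.Eventually.of_forall fun x => ?_)
        have h1 : |fderiv ℝ p x v| ≤ ‖gradient p x‖ * ‖v‖ := by
          rw [← inner_gradient_eq p x v]
          exact abs_real_inner_le_norm _ _
        have h2 := hM x
        rw [Real.norm_eq_abs, abs_mul]
        calc |φ x| * |fderiv ℝ p x v| ≤ M * (‖gradient p x‖ * ‖v‖) := by
              apply mul_le_mul h2 h1 (abs_nonneg _) ((abs_nonneg (φ x)).trans h2)
          _ = M * ‖v‖ * ‖gradient p x‖ := by ring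
      · exact (hφc.mul hp_cont).integrable_of_hasCompactSupport hφs.mul_right
      · exact fun x _ => hφdiff x
      · exact fun x _ => hp_diff x
    -- now the weak-derivative computation
    have Iφg : Integrable (fun x => φ x • g x) :=
      Ig.locallyIntegrable.integrable_smul_left_of_hasCompactSupport hφc hφs
    have Iφgp : Integrable (fun x => φ x • gradient p x) :=
      Igradp.locallyIntegrable.integrable_smul_left_of_hasCompactSupport hφc hφs
    refine ext_inner_left ℝ fun v => ?_
    rw [← integral_inner Iφg v, ← integral_inner Iφgp v]
    obtain ⟨M₂, hM₂⟩ := (hDφcs v).exists_bound_of_continuous (hDφvc v)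
    -- product-integrability of the two swapped integrands
    have ISw1 : Integrable (fun z : Euc n × Euc n =>
        φ z.1 * (q₀ z.2 * fderiv ℝ (fun u => k u z.2) z.1 v))
        ((volume : Measure (Euc n)).prod volume) := by
      refine Integrable.mono' ((IG.swap.norm).const_mul (M * ‖v‖))
        ?_ (Filter.Eventually.of_forall fun z => ?_)
      · refine ((hφc.measurable.comp measurable_fst).mul
          ((hq₀_meas.comp measurable_snd).mul
            ((hDkv_meas v).comp measurable_swap))).aestronglyMeasurable
      · have h1 := hDkv_bound v (z.2, z.1)
        have h2 := hM z.1
        simp only [Function.comp_apply, Prod.swap]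
        rw [Real.norm_eq_abs, abs_mul, abs_mul]
        rw [norm_smul, Real.norm_of_nonneg (hq₀_nonneg z.2)]
        rw [abs_of_nonneg (hq₀_nonneg z.2)]
        calc |φ z.1| * (q₀ z.2 * |fderiv ℝ (fun u => k u z.2) z.1 v|)
            ≤ M * (q₀ z.2 * (‖G (z.2, z.1)‖ * ‖v‖)) := by
              apply mul_le_mul h2 ?_ ?_ ((abs_nonneg (φ z.1)).trans h2)
              · exact mul_le_mul_of_nonneg_left h1 (hq₀_nonneg z.2)
              · exact mul_nonneg (hq₀_nonneg z.2) (abs_nonneg _)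
          _ = M * ‖v‖ * (q₀ z.2 * ‖G (z.2, z.1)‖) := by ring
    have ISw2 : Integrable (fun z : Euc n × Euc n =>
        q₀ z.1 * (fderiv ℝ φ z.2 v * k z.2 z.1))
        ((volume : Measure (Euc n)).prod volume) := by
      refine Integrable.mono' (Iqk.norm.const_mul M₂)
        ?_ (Filter.Eventually.of_forall fun z => ?_)
      · exact ((hq₀_meas.comp measurable_fst).mul
          (((hDφvc v).measurable.comp measurable_snd).mul hk_meas')).aestronglyMeasurable
      · have h2 := hM₂ z.2
        rw [Real.norm_eq_abs, abs_mul, abs_mul, abs_of_nonneg (hq₀_nonneg z.1),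
          abs_of_nonneg (hk_pos z.1 z.2).le, Real.norm_eq_abs,
          abs_of_nonneg (mul_nonneg (hq₀_nonneg z.1) (hk_pos z.1 z.2).le)]
        calc q₀ z.1 * (|fderiv ℝ φ z.2 v| * k z.2 z.1)
            ≤ q₀ z.1 * (M₂ * k z.2 z.1) := by
              apply mul_le_mul_of_nonneg_left ?_ (hq₀_nonneg z.1)
              exact mul_le_mul_of_nonneg_right ((Real.norm_eq_abs _ ▸ h2)) (hk_pos z.1 z.2).le
          _ = M₂ * (q₀ z.1 * k z.2 z.1) := by ring
    calc (∫ x, (inner ℝ v (φ x • g x) : ℝ))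
        = ∫ x, φ x * ∫ x₀, q₀ x₀ * fderiv ℝ (fun u => k u x₀) x v := by
          refine integral_congr_ae ?_
          filter_upwards [IG.prod_left_ae] with x hsec
          beta_reduce
          rw [real_inner_smul_right]
          congr 1
          rw [hgdef]
          beta_reduce
          rw [← integral_inner hsec v]
          refine integral_congr_ae (Filter.Eventually.of_forall fun x₀ => ?_)
          beta_reduce
          rw [real_inner_smul_right]
          congr 1
          exact inner_gradient_eq' _ _ _
      _ = ∫ x, ∫ x₀, φ x * (q₀ x₀ * fderiv ℝ (fun u => k u x₀) x v) := by
          refine integral_congr_ae (Filter.Eventually.of_forall fun x => ?_)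
          beta_reduce
          exact (integral_const_mul _ _).symm
      _ = ∫ x₀, ∫ x, φ x * (q₀ x₀ * fderiv ℝ (fun u => k u x₀) x v) :=
          integral_integral_swap ISw1
      _ = ∫ x₀, q₀ x₀ * ∫ x, φ x * fderiv ℝ (fun u => k u x₀) x v := by
          refine integral_congr_ae (Filter.Eventually.of_forall fun x₀ => ?_)
          beta_reduce
          rw [← integral_const_mul]
          refine integral_congr_ae (Filter.Eventually.of_forall fun x => ?_)
          beta_reduce
          ring
      _ = ∫ x₀, q₀ x₀ * (- ∫ x, fderiv ℝ φ x v * k x x₀) := by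
          refine integral_congr_ae (Filter.Eventually.of_forall fun x₀ => ?_)
          beta_reduce
          rw [IBPk v x₀]
      _ = - ∫ x₀, ∫ x, q₀ x₀ * (fderiv ℝ φ x v * k x x₀) := by
          rw [← integral_neg]
          refine integral_congr_ae (Filter.Eventually.of_forall fun x₀ => ?_)
          beta_reduce
          rw [mul_neg]
          congr 1
          rw [← integral_const_mul]
      _ = - ∫ x, ∫ x₀, q₀ x₀ * (fderiv ℝ φ x v * k x x₀) := by
          rw [integral_integral_swap ISw2]
      _ = - ∫ x, fderiv ℝ φ x v * p x := by
          congr 1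
          refine integral_congr_ae (Filter.Eventually.of_forall fun x => ?_)
          beta_reduce
          rw [hp x, ← integral_const_mul]
          refine integral_congr_ae (Filter.Eventually.of_forall fun x₀ => ?_)
          beta_reduce
          ring
      _ = ∫ x, φ x * fderiv ℝ p x v := by rw [IBPp v]
      _ = ∫ x, (inner ℝ v (φ x • gradient p x) : ℝ) := by
          refine integral_congr_ae (Filter.Eventually.of_forall fun x => ?_)
          beta_reduce
          rw [real_inner_smul_right]
          congr 1
          exact (inner_gradient_eq' _ _ _).symm
  -- integrability of the inner-product cross term
  have innerInt : ∀ ψ : Euc n → Euc n, Measurable ψ →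
      Integrable (fun z : Euc n × Euc n => q₀ z.1 * k z.2 z.1 * ‖ψ z.2‖ ^ 2)
        ((volume : Measure (Euc n)).prod volume) →
      Integrable (fun z : Euc n × Euc n => (inner ℝ (q₀ z.1 • G z) (ψ z.2) : ℝ))
        ((volume : Measure (Euc n)).prod volume) := by
    intro ψ hψ ICψ
    have hinner_meas : Measurable fun z : Euc n × Euc n =>
        (inner ℝ (q₀ z.1 • G z) (ψ z.2) : ℝ) :=
      ((hq₀_meas.comp measurable_fst).smul hG_meas).inner (hψ.comp measurable_snd)
    refine Integrable.mono' ((IA.add ICψ).div_const 2) hinner_meas.aestronglyMeasurable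
      (Filter.Eventually.of_forall fun z => ?_)
    simp only [Pi.add_apply]
    have h1 := abs_real_inner_le_norm (q₀ z.1 • G z) (ψ z.2)
    rw [norm_smul, Real.norm_of_nonneg (hq₀_nonneg z.1)] at h1
    have hnormG : ‖G z‖ = k z.2 z.1 * ‖scoreOf (fun u => k u z.1) z.2‖ := by
      rw [← hGsk z, norm_smul, Real.norm_of_nonneg (hk_pos z.1 z.2).le]
    rw [hnormG] at h1
    rw [Real.norm_eq_abs]
    have hqk0 : 0 ≤ q₀ z.1 * k z.2 z.1 := mul_nonneg (hq₀_nonneg z.1) (hk_pos z.1 z.2).le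
    nlinarith [mul_nonneg hqk0
      (sq_nonneg (‖scoreOf (fun u => k u z.1) z.2‖ - ‖ψ z.2‖)), h1]
  -- cross term identity
  have cross : ∀ ψ : Euc n → Euc n, Measurable ψ →
      Integrable (fun z : Euc n × Euc n => q₀ z.1 * k z.2 z.1 * ‖ψ z.2‖ ^ 2)
        ((volume : Measure (Euc n)).prod volume) →
      (∫ z : Euc n × Euc n, (inner ℝ (q₀ z.1 • G z) (ψ z.2) : ℝ)
          ∂((volume : Measure (Euc n)).prod volume))
        = ∫ x : Euc n, p x * (inner ℝ (scoreOf p x) (ψ x) : ℝ) := by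
    intro ψ hψ ICψ
    have Iinner := innerInt ψ hψ ICψ
    have Iinner' : Integrable (Function.uncurry fun x₀ xt : Euc n =>
        (inner ℝ (q₀ x₀ • G (x₀, xt)) (ψ xt) : ℝ))
        ((volume : Measure (Euc n)).prod volume) := Iinner
    rw [integral_prod _ Iinner, integral_integral_swap Iinner']
    refine integral_congr_ae ?_
    filter_upwards [IG.prod_left_ae, key] with xt hsec hkey
    beta_reduce
    calc (∫ x₀, (inner ℝ (q₀ x₀ • G (x₀, xt)) (ψ xt) : ℝ))
        = ∫ x₀, (inner ℝ (ψ xt) (q₀ x₀ • G (x₀, xt)) : ℝ) := by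
          refine integral_congr_ae (Filter.Eventually.of_forall fun x₀ => ?_)
          beta_reduce
          rw [real_inner_comm]
      _ = (inner ℝ (ψ xt) (g xt) : ℝ) := by
          rw [hgdef]
          beta_reduce
          exact integral_inner hsec (ψ xt)
      _ = (inner ℝ (ψ xt) (gradient p xt) : ℝ) := by rw [hkey]
      _ = p xt * (inner ℝ (scoreOf p xt) (ψ xt) : ℝ) := by
          rw [hgradp xt, real_inner_smul_right, real_inner_comm]
  -- second marginal: ∫∫ q₀ k F(xt) = ∫ p F
  have marg : ∀ F : Euc n → ℝ, Measurable F →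
      Integrable (fun z : Euc n × Euc n => q₀ z.1 * k z.2 z.1 * F z.2)
        ((volume : Measure (Euc n)).prod volume) →
      (∫ z : Euc n × Euc n, q₀ z.1 * k z.2 z.1 * F z.2
          ∂((volume : Measure (Euc n)).prod volume))
        = ∫ x : Euc n, p x * F x := by
    intro F hF hInt
    rw [integral_prod _ hInt, integral_integral_swap hInt]
    refine integral_congr_ae (Filter.Eventually.of_forall fun xt => ?_)
    show (∫ x₀ : Euc n, q₀ x₀ * k xt x₀ * F xt) = p xt * F xt
    rw [integral_mul_const, ← hp xt]
  have main : ∀ ψ : Euc n → Euc n, Measurable ψ → dsmFin n q₀ k ψ → smFin n p ψ →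
      dsmObj n q₀ k ψ = smObj n p ψ + (dsmObj n q₀ k (fun _ => 0) - smObj n p (fun _ => 0)) := by
    intro ψ hψ hdψ hsψ
    have Idψ : Integrable (fun z : Euc n × Euc n =>
        q₀ z.1 * k z.2 z.1 * ‖scoreOf (fun u => k u z.1) z.2 - ψ z.2‖ ^ 2)
        ((volume : Measure (Euc n)).prod volume) := by
      have h := hdψ; unfold dsmFin at h; rwa [hvol] at h
    have Isψ : Integrable (fun x : Euc n => p x * ‖scoreOf p x - ψ x‖ ^ 2) := hsψ
    have hψn_meas : Measurable fun z : Euc n × Euc n => ‖ψ z.2‖ ^ 2 :=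
      ((hψ.comp measurable_snd).norm.pow_const 2)
    have hψn_meas' : Measurable fun x : Euc n => ‖ψ x‖ ^ 2 := hψ.norm.pow_const 2
    have ICψ : Integrable (fun z : Euc n × Euc n => q₀ z.1 * k z.2 z.1 * ‖ψ z.2‖ ^ 2)
        ((volume : Measure (Euc n)).prod volume) := by
      refine Integrable.mono' ((Idψ.add IA).const_mul 2)
        (hqk_meas.mul hψn_meas).aestronglyMeasurable
        (Filter.Eventually.of_forall fun z => ?_)
      simp only [Pi.add_apply]
      have hqk0 : 0 ≤ q₀ z.1 * k z.2 z.1 := mul_nonneg (hq₀_nonneg z.1) (hk_pos z.1 z.2).le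
      have htri : ‖ψ z.2‖ ≤ ‖scoreOf (fun u => k u z.1) z.2 - ψ z.2‖
          + ‖scoreOf (fun u => k u z.1) z.2‖ := by
        have := norm_sub_le (scoreOf (fun u => k u z.1) z.2 - ψ z.2)
          (scoreOf (fun u => k u z.1) z.2)
        simpa using this
      rw [Real.norm_eq_abs, abs_of_nonneg (mul_nonneg hqk0 (by positivity))]
      have h2 : ‖ψ z.2‖ * ‖ψ z.2‖ ≤ (‖scoreOf (fun u => k u z.1) z.2 - ψ z.2‖
          + ‖scoreOf (fun u => k u z.1) z.2‖) * (‖scoreOf (fun u => k u z.1) z.2 - ψ z.2‖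
          + ‖scoreOf (fun u => k u z.1) z.2‖) := mul_self_le_mul_self (norm_nonneg _) htri
      nlinarith [mul_le_mul_of_nonneg_left h2 hqk0, mul_nonneg hqk0
        (sq_nonneg (‖scoreOf (fun u => k u z.1) z.2 - ψ z.2‖
          - ‖scoreOf (fun u => k u z.1) z.2‖))]
    have IBψ := innerInt ψ hψ ICψ
    have ICpψ : Integrable (fun x : Euc n => p x * ‖ψ x‖ ^ 2) := by
      refine Integrable.mono' ((Isψ.add Isp).const_mul 2)
        (hp_cont.measurable.mul hψn_meas').aestronglyMeasurable
        (Filter.Eventually.of_forall fun x => ?_)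
      simp only [Pi.add_apply]
      have hp0 := (hp_pos x).le
      have htri : ‖ψ x‖ ≤ ‖scoreOf p x - ψ x‖ + ‖scoreOf p x‖ := by
        have := norm_sub_le (scoreOf p x - ψ x) (scoreOf p x)
        simpa using this
      rw [Real.norm_eq_abs, abs_of_nonneg (mul_nonneg hp0 (by positivity))]
      have h2 : ‖ψ x‖ * ‖ψ x‖ ≤ (‖scoreOf p x - ψ x‖ + ‖scoreOf p x‖)
          * (‖scoreOf p x - ψ x‖ + ‖scoreOf p x‖) := mul_self_le_mul_self (norm_nonneg _) htri
      nlinarith [mul_le_mul_of_nonneg_left h2 hp0, mul_nonneg hp0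
        (sq_nonneg (‖scoreOf p x - ψ x‖ - ‖scoreOf p x‖))]
    have IBpψ : Integrable (fun x : Euc n => p x * (inner ℝ (scoreOf p x) (ψ x) : ℝ)) := by
      refine Integrable.mono' ((Isp.add ICpψ).div_const 2)
        (hp_cont.measurable.mul (hsp_meas.inner hψ)).aestronglyMeasurable
        (Filter.Eventually.of_forall fun x => ?_)
      simp only [Pi.add_apply]
      have hp0 := (hp_pos x).le
      have h1 := abs_real_inner_le_norm (scoreOf p x) (ψ x)
      rw [Real.norm_eq_abs, abs_mul, abs_of_nonneg hp0]
      nlinarith [mul_nonneg hp0 (sq_nonneg (‖scoreOf p x‖ - ‖ψ x‖)),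
        mul_le_mul_of_nonneg_left h1 hp0, abs_nonneg (inner ℝ (scoreOf p x) (ψ x) : ℝ)]
    -- pointwise expansions
    have hptws : ∀ z : Euc n × Euc n,
        q₀ z.1 * k z.2 z.1 * ‖scoreOf (fun u => k u z.1) z.2 - ψ z.2‖ ^ 2
        = q₀ z.1 * k z.2 z.1 * ‖scoreOf (fun u => k u z.1) z.2‖ ^ 2
          - 2 * (inner ℝ (q₀ z.1 • G z) (ψ z.2) : ℝ)
          + q₀ z.1 * k z.2 z.1 * ‖ψ z.2‖ ^ 2 := by
      intro z
      have h1 : (inner ℝ (q₀ z.1 • G z) (ψ z.2) : ℝ)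
          = q₀ z.1 * (k z.2 z.1 * (inner ℝ (scoreOf (fun u => k u z.1) z.2) (ψ z.2) : ℝ)) := by
        rw [← hGsk z, real_inner_smul_left, real_inner_smul_left]
      rw [h1, norm_sub_sq_real]
      ring
    have hptws2 : ∀ x : Euc n, p x * ‖scoreOf p x - ψ x‖ ^ 2
        = p x * ‖scoreOf p x‖ ^ 2 - 2 * (p x * (inner ℝ (scoreOf p x) (ψ x) : ℝ))
          + p x * ‖ψ x‖ ^ 2 := by
      intro x
      rw [norm_sub_sq_real]
      ring
    have hd_eq : dsmObj n q₀ k ψ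
        = (∫ z : Euc n × Euc n, q₀ z.1 * k z.2 z.1 * ‖scoreOf (fun u => k u z.1) z.2‖ ^ 2
            ∂((volume : Measure (Euc n)).prod volume))
          - 2 * (∫ z : Euc n × Euc n, (inner ℝ (q₀ z.1 • G z) (ψ z.2) : ℝ)
            ∂((volume : Measure (Euc n)).prod volume))
          + ∫ z : Euc n × Euc n, q₀ z.1 * k z.2 z.1 * ‖ψ z.2‖ ^ 2
            ∂((volume : Measure (Euc n)).prod volume) := by
      unfold dsmObj
      rw [hvol]
      rw [integral_congr_ae (Filter.Eventually.of_forall hptws)]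
      have I1 : Integrable (fun z : Euc n × Euc n =>
          q₀ z.1 * k z.2 z.1 * ‖scoreOf (fun u => k u z.1) z.2‖ ^ 2
            - 2 * (inner ℝ (q₀ z.1 • G z) (ψ z.2) : ℝ))
          ((volume : Measure (Euc n)).prod volume) := IA.sub (IBψ.const_mul 2)
      rw [integral_add I1 ICψ, integral_sub IA (IBψ.const_mul 2), integral_const_mul]
    have hs_eq : smObj n p ψ
        = (∫ x : Euc n, p x * ‖scoreOf p x‖ ^ 2)
          - 2 * (∫ x : Euc n, p x * (inner ℝ (scoreOf p x) (ψ x) : ℝ))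
          + ∫ x : Euc n, p x * ‖ψ x‖ ^ 2 := by
      unfold smObj
      rw [integral_congr_ae (Filter.Eventually.of_forall hptws2)]
      have I1 : Integrable (fun x : Euc n =>
          p x * ‖scoreOf p x‖ ^ 2 - 2 * (p x * (inner ℝ (scoreOf p x) (ψ x) : ℝ))) :=
        Isp.sub (IBpψ.const_mul 2)
      rw [integral_add I1 ICpψ, integral_sub Isp (IBpψ.const_mul 2), integral_const_mul]
    have hcross := cross ψ hψ ICψ
    have hmarg := marg (fun x => ‖ψ x‖ ^ 2) hψn_meas' ICψ
    have hd0 : dsmObj n q₀ k (fun _ => 0)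
        = ∫ z : Euc n × Euc n, q₀ z.1 * k z.2 z.1 * ‖scoreOf (fun u => k u z.1) z.2‖ ^ 2
            ∂((volume : Measure (Euc n)).prod volume) := by
      unfold dsmObj
      rw [hvol]
      simp
    have hs0 : smObj n p (fun _ => 0) = ∫ x : Euc n, p x * ‖scoreOf p x‖ ^ 2 := by
      unfold smObj
      simp
    rw [hd_eq, hs_eq, hd0, hs0, hcross, hmarg]
    ring
  refine ⟨dsmObj n q₀ k (fun _ => 0) - smObj n p (fun _ => 0), main, ?_⟩
  intro Ψ hΨ ψ₀ hψ₀
  have key2 : ∀ ψ ∈ Ψ, dsmObj n q₀ k ψ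
      = smObj n p ψ + (dsmObj n q₀ k (fun _ => 0) - smObj n p (fun _ => 0)) :=
    fun ψ h => main ψ (hΨ ψ h).1 (hΨ ψ h).2.1 (hΨ ψ h).2.2
  constructor <;> intro h ψ hψ
  · have := h ψ hψ; rw [key2 ψ hψ, key2 ψ₀ hψ₀] at this; linarith
  · have := h ψ hψ; rw [key2 ψ hψ, key2 ψ₀ hψ₀]; linarith


end
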